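/- Let X be a real random variable whose law has an even density G' with cumulative distribution function G. Let Σ be a k×k symmetric positive definite matrix and let f be a probability density on ℝ^k of elliptical form centred at the origin, i.e. f(y) = g(yᵀΣ⁻¹y) for some measurable function g : [0,∞) → [0,∞). Then for every a ∈ ℝ^k, the function y ↦ 2 f(y) G(aᵀy) is a probability density on ℝ^k, i.e. ∫_{ℝ^k} 2 f(y) G(aᵀy) dy = 1. -/

import Mathlib

open MeasureTheory Matrix ProbabilityTheory Real

/-- Standard normal cumulative distribution function
`Φ(x) = ∫_{-∞}^x (2π)^{-1/2} exp(-u²/2) du`. -/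
noncomputable def stdNormCDF (x : ℝ) : ℝ :=
  ∫ u in Set.Iic x, (2 * Real.pi) ^ (-(1:ℝ)/2) * Real.exp (-(u ^ 2) / 2)

/-- Density `φ(z; Ω) = (2π)^{-k/2} (det Ω)^{-1/2} exp(-½ zᵀ Ω⁻¹ z)` of the centred
multivariate normal distribution with covariance matrix `Ω`. -/
noncomputable def mvNormalPDF {ι : Type*} [Fintype ι] [DecidableEq ι]
    (Ω : Matrix ι ι ℝ) (z : ι → ℝ) : ℝ :=
  (2 * Real.pi) ^ (-(Fintype.card ι : ℝ) / 2) * Ω.det ^ (-(1:ℝ)/2) *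
    Real.exp (-(z ⬝ᵥ Ω⁻¹.mulVec z) / 2)

/-- Density `f(z) = 2 φ(z; Ω) Φ(αᵀ z)` of the multivariate skew-normal
distribution `SN(Ω, α)`. -/
noncomputable def snPDF {ι : Type*} [Fintype ι] [DecidableEq ι]
    (Ω : Matrix ι ι ℝ) (α : ι → ℝ) (z : ι → ℝ) : ℝ :=
  2 * mvNormalPDF Ω z * stdNormCDF (α ⬝ᵥ z)

/-- A correlation matrix: symmetric positive definite with unit diagonal. -/
def IsCorrelationMatrix {ι : Type*} [Fintype ι] (Ω : Matrix ι ι ℝ) : Prop :=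
  Ω.PosDef ∧ ∀ i, Ω i i = 1

/-- The law of the multivariate skew-normal distribution `SN(Ω, α)`:
the measure on `ι → ℝ` with density `snPDF Ω α` w.r.t. Lebesgue measure. -/
noncomputable def snMeasure {ι : Type*} [Fintype ι] [DecidableEq ι]
    (Ω : Matrix ι ι ℝ) (α : ι → ℝ) : Measure (ι → ℝ) :=
  volume.withDensity fun z => ENNReal.ofReal (snPDF Ω α z)

/-- Chi-square density with `p` degrees of freedom. -/
noncomputable def chiSqPDF (p : ℕ) (x : ℝ) : ℝ :=
  if 0 < x then x ^ ((p:ℝ)/2 - 1) * Real.exp (-x/2) / (2 ^ ((p:ℝ)/2) * Real.Gamma ((p:ℝ)/2))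
  else 0

/-- Chi-square law with `p` degrees of freedom. -/
noncomputable def chiSqMeasure (p : ℕ) : Measure ℝ :=
  volume.withDensity fun x => ENNReal.ofReal (chiSqPDF p x)

/-- skewing an elliptical density.  If `X` has an even density
`G'` with cdf `G` and `f(y) = g(yᵀΣ⁻¹y)` is an elliptical probability density
centred at the origin, then for every `a ∈ ℝ^k`, `y ↦ 2 f(y) G(aᵀy)` is a
probability density on `ℝ^k`. -/
theorem skewing_elliptical_density {k : ℕ}
    {S : Type*} [MeasureSpace S] [IsProbabilityMeasure (ℙ : Measure S)]
    (X : S → ℝ) (hXmeas : Measurable X) (G' : ℝ → ℝ)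
    (hXlaw : Measure.map X ℙ = volume.withDensity fun x => ENNReal.ofReal (G' x))
    (hG'even : ∀ᵐ x : ℝ, G' (-x) = G' x)
    (G : ℝ → ℝ) (hG : ∀ x, G x = (ℙ {ω | X ω ≤ x}).toReal)
    (Sig : Matrix (Fin k) (Fin k) ℝ) (hSigPD : Sig.PosDef)
    (g : ℝ → ℝ) (hgmeas : Measurable g) (hg0 : ∀ x, 0 ≤ g x)
    (f : (Fin k → ℝ) → ℝ) (hf : ∀ y, f y = g (y ⬝ᵥ Sig⁻¹.mulVec y))
    (hf1 : (∫ y : Fin k → ℝ, f y) = 1)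
    (a : Fin k → ℝ) :
    (∀ y, 0 ≤ 2 * f y * G (a ⬝ᵥ y)) ∧ (∫ y : Fin k → ℝ, 2 * f y * G (a ⬝ᵥ y)) = 1 := by
  set μ := Measure.map X ℙ with hμ
  have hprob : IsProbabilityMeasure μ := Measure.isProbabilityMeasure_map hXmeas.aemeasurable
  have hmap : ∀ x : ℝ, ℙ {ω | X ω ≤ x} = μ (Set.Iic x) := fun x => by
    rw [hμ, Measure.map_apply hXmeas measurableSet_Iic]; rfl
  -- nonnegativity and boundedness of G
  have hG0 : ∀ x, 0 ≤ G x := fun x => by rw [hG]; exact ENNReal.toReal_nonneg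
  have hG1 : ∀ x, G x ≤ 1 := fun x => by
    rw [hG]
    exact ENNReal.toReal_le_of_le_ofReal one_pos.le (by simpa using prob_le_one)
  -- symmetry of μ
  have key : ∀ s : Set ℝ, MeasurableSet s → μ ((fun u : ℝ => -u) ⁻¹' s) = μ s := by
    intro s hs
    rw [hXlaw, withDensity_apply _ (hs.preimage measurable_neg), withDensity_apply _ hs,
      ← lintegral_indicator (hs.preimage measurable_neg), ← lintegral_indicator hs]
    conv_lhs => rw [← Measure.map_neg_eq_self (volume : Measure ℝ),
      show (Neg.neg : ℝ → ℝ) = ⇑(MeasurableEquiv.neg ℝ) from rfl]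
    rw [lintegral_map_equiv]
    refine lintegral_congr_ae ?_
    filter_upwards [hG'even] with x hx
    by_cases hxs : x ∈ s <;>
      simp [Set.indicator, Set.mem_preimage, hxs, hx, MeasurableEquiv.neg_apply]
  -- μ has no atoms
  have hatom : ∀ x : ℝ, μ {x} = 0 := by
    intro x
    rw [hXlaw, withDensity_apply _ (measurableSet_singleton x)]
    exact setLIntegral_measure_zero _ _ (measure_singleton x)
  -- G x + G (-x) = 1
  have hGsum : ∀ x : ℝ, G x + G (-x) = 1 := by
    intro x
    have h1 : μ (Set.Iic (-x)) = μ (Set.Ici x) := by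
      have := key (Set.Iic (-x)) measurableSet_Iic
      rw [show (fun u : ℝ => -u) ⁻¹' Set.Iic (-x) = Set.Ici x by
        ext u; simp [neg_le_neg_iff, neg_le]] at this
      exact this.symm
    have h2 : μ (Set.Ici x) = μ (Set.Ioi x) := by
      rw [← Set.Ioi_union_left]
      refine le_antisymm ((measure_union_le _ _).trans ?_) (measure_mono Set.subset_union_left)
      rw [hatom x, add_zero]
    have h3 : μ (Set.Iic x) + μ (Set.Ioi x) = 1 := by
      rw [← measure_union (Set.Iic_disjoint_Ioi le_rfl) measurableSet_Ioi,
        Set.Iic_union_Ioi, measure_univ]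
    rw [hG, hG, hmap, hmap, h1, h2, ← ENNReal.toReal_add (measure_ne_top μ _)
      (measure_ne_top μ _), h3, ENNReal.toReal_one]
  -- properties of f
  have hfeven : ∀ y : Fin k → ℝ, f (-y) = f y := by
    intro y; rw [hf, hf]
    simp [Matrix.mulVec_neg, dotProduct_neg, neg_dotProduct]
  have hfmeas : Measurable f := by
    have : f = fun y => g (y ⬝ᵥ Sig⁻¹.mulVec y) := funext hf
    rw [this]
    apply hgmeas.comp
    simp only [dotProduct, mulVec]
    exact Finset.measurable_sum _ fun i _ => (measurable_pi_apply i).mul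
      (Finset.measurable_sum _ fun j _ => (measurable_pi_apply j).const_mul _)
  have hf0 : ∀ y, 0 ≤ f y := fun y => by rw [hf]; exact hg0 _
  have hfint : Integrable f := by
    by_contra h
    rw [integral_undef h] at hf1
    norm_num at hf1
  -- G is measurable (monotone)
  have hGmono : Monotone G := by
    intro x y hxy
    rw [hG, hG]
    exact ENNReal.toReal_mono (measure_ne_top _ _)
      (measure_mono fun ω hω => le_trans hω hxy)
  have hGmeas : Measurable G := hGmono.measurable
  -- integrability of the two integrands
  have hdp : Measurable fun y : Fin k → ℝ => a ⬝ᵥ y := by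
    simp only [dotProduct]
    exact Finset.measurable_sum _ fun i _ => (measurable_pi_apply i).const_mul _
  have hint1 : Integrable fun y : Fin k → ℝ => 2 * f y * G (a ⬝ᵥ y) := by
    have := Integrable.bdd_mul (hfint.const_mul 2)
      ((hGmeas.comp hdp).aestronglyMeasurable)
      (c := 1) (Filter.Eventually.of_forall fun y => by simp only [Function.comp_apply, Real.norm_eq_abs]; rw [abs_of_nonneg (hG0 _)]; exact hG1 _)
    exact this.congr (Filter.Eventually.of_forall fun y => by
      simp [Function.comp, mul_comm])
  have hint2 : Integrable fun y : Fin k → ℝ => 2 * f y * G (-(a ⬝ᵥ y)) := by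
    have := Integrable.bdd_mul (hfint.const_mul 2)
      ((hGmeas.comp hdp.neg).aestronglyMeasurable)
      (c := 1) (Filter.Eventually.of_forall fun y => by simp only [Function.comp_apply, Real.norm_eq_abs]; rw [abs_of_nonneg (hG0 _)]; exact hG1 _)
    exact this.congr (Filter.Eventually.of_forall fun y => by
      simp [Function.comp, mul_comm])
  refine ⟨fun y => mul_nonneg (mul_nonneg (by norm_num) (hf0 y)) (hG0 _), ?_⟩
  -- symmetry of the integral
  have hsym : (∫ y : Fin k → ℝ, 2 * f y * G (-(a ⬝ᵥ y)))
      = ∫ y : Fin k → ℝ, 2 * f y * G (a ⬝ᵥ y) := by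
    rw [← integral_neg_eq_self (fun y : Fin k → ℝ => 2 * f y * G (a ⬝ᵥ y)) volume]
    refine integral_congr_ae (Filter.Eventually.of_forall fun y => ?_)
    simp [hfeven, dotProduct_neg]
  have hadd : (∫ y : Fin k → ℝ, 2 * f y * G (a ⬝ᵥ y))
      + ∫ y : Fin k → ℝ, 2 * f y * G (-(a ⬝ᵥ y)) = 2 := by
    rw [← integral_add hint1 hint2]
    have : (∫ y : Fin k → ℝ, (2 * f y * G (a ⬝ᵥ y) + 2 * f y * G (-(a ⬝ᵥ y))))
        = ∫ y : Fin k → ℝ, 2 * f y := by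
      refine integral_congr_ae (Filter.Eventually.of_forall fun y => ?_)
      have h := hGsum (a ⬝ᵥ y)
      calc 2 * f y * G (a ⬝ᵥ y) + 2 * f y * G (-(a ⬝ᵥ y))
          = 2 * f y * (G (a ⬝ᵥ y) + G (-(a ⬝ᵥ y))) := by ring
        _ = 2 * f y := by rw [h, mul_one]
    rw [this, integral_const_mul, hf1, mul_one]
  linarith [hsym, hadd]
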